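/- If the objective in the P₁-subproblem satisfies its stationarity equation SᵀSP₁EEᵀ + ρP₁ = C, then multiplying by SᵀS and (I − SᵀS) splits the solution as P₁ = SᵀS·C'(EEᵀ + ρI)⁻¹ + (I − SᵀS)·C/ρ for appropriate right-hand sides; i.e., the solution restricted to the range and kernel of SᵀS is determined by two decoupled invertible linear systems. -/

import Mathlib

open Matrix

/-- For a sampling matrix `S` and `ρ > 0`, the stationarity equation
`SᵀS P₁ EEᵀ + ρP₁ = C` of the P₁-subproblem has a unique solution, obtained by
decoupling along the range and kernel of the projection `SᵀS`:
`P₁ = SᵀS·C(EEᵀ + ρI)⁻¹ + (1/ρ)(I − SᵀS)·C`. -/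
theorem stmt17 {m n Ls Ll : ℕ} (S : Matrix (Fin m) (Fin n) ℝ)
    (j : Fin m → Fin n) (hinj : Function.Injective j)
    (hrow : ∀ k i, S k i = if i = j k then 1 else 0)
    (E : Matrix (Fin Ls) (Fin Ll) ℝ) (ρ : ℝ) (hρ : 0 < ρ)
    (C : Matrix (Fin n) (Fin Ls) ℝ) :
    (∃! P : Matrix (Fin n) (Fin Ls) ℝ, Sᵀ * S * P * (E * Eᵀ) + ρ • P = C) ∧
    Sᵀ * S * (Sᵀ * S * C * (E * Eᵀ + ρ • (1 : Matrix (Fin Ls) (Fin Ls) ℝ))⁻¹ +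
            ρ⁻¹ • ((1 - Sᵀ * S) * C)) * (E * Eᵀ) +
        ρ • (Sᵀ * S * C * (E * Eᵀ + ρ • (1 : Matrix (Fin Ls) (Fin Ls) ℝ))⁻¹ +
            ρ⁻¹ • ((1 - Sᵀ * S) * C)) = C := by
  set Q : Matrix (Fin n) (Fin n) ℝ := Sᵀ * S with hQdef
  set M : Matrix (Fin Ls) (Fin Ls) ℝ := E * Eᵀ with hMdef
  set A : Matrix (Fin Ls) (Fin Ls) ℝ := M + ρ • 1 with hAdef
  have hSS : S * Sᵀ = 1 := by
    ext k k'
    simp only [mul_apply, transpose_apply, hrow, one_apply]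
    rw [Finset.sum_eq_single (j k)]
    · simp [hinj.eq_iff, eq_comm]
    · intro b _ hb; simp [hb]
    · simp
  have hQQ : Q * Q = Q := by
    rw [hQdef]
    calc Sᵀ * S * (Sᵀ * S) = Sᵀ * (S * Sᵀ) * S := by simp only [Matrix.mul_assoc]
    _ = Sᵀ * S := by rw [hSS, Matrix.mul_one]
  have hMps : M.PosSemidef := by
    have := Matrix.posSemidef_self_mul_conjTranspose E
    simpa [hMdef, Matrix.conjTranspose_eq_transpose_of_trivial] using this
  have hApd : A.PosDef := by
    refine Matrix.posDef_iff_dotProduct_mulVec.mpr ⟨?_, ?_⟩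
    · refine hMps.isHermitian.add ?_
      show (ρ • (1 : Matrix (Fin Ls) (Fin Ls) ℝ))ᴴ = ρ • 1
      simp
    · intro x hx
      have h1 : 0 ≤ dotProduct (star x) (M *ᵥ x) := (Matrix.posSemidef_iff_dotProduct_mulVec.mp hMps).2 x
      have h2 : 0 < dotProduct (star x) ((ρ • (1 : Matrix (Fin Ls) (Fin Ls) ℝ)) *ᵥ x) := by
        rw [Matrix.smul_mulVec, Matrix.one_mulVec, dotProduct_smul]
        have hpos : (0:ℝ) < dotProduct x (star x) :=
          Matrix.dotProduct_self_star_pos_iff.mpr hx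
        rw [smul_eq_mul, dotProduct_comm]
        exact mul_pos hρ hpos
      rw [hAdef, Matrix.add_mulVec, dotProduct_add]
      exact add_pos_of_nonneg_of_pos h1 h2
  have hAunit : IsUnit A.det := isUnit_iff_ne_zero.mpr (ne_of_gt hApd.det_pos)
  have hAinv : A⁻¹ * A = 1 := Matrix.nonsing_inv_mul A hAunit
  have hAinv' : A⁻¹ * M + ρ • A⁻¹ = 1 := by
    calc A⁻¹ * M + ρ • A⁻¹ = A⁻¹ * (M + ρ • 1) := by
          rw [Matrix.mul_add, Matrix.mul_smul, Matrix.mul_one]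
    _ = 1 := by rw [← hAdef, hAinv]
  set P₀ : Matrix (Fin n) (Fin Ls) ℝ :=
    Q * C * A⁻¹ + ρ⁻¹ • ((1 - Q) * C) with hP₀def
  have hQ1Q : Q * (1 - Q) = 0 := by
    rw [Matrix.mul_sub, Matrix.mul_one, hQQ, sub_self]
  have hQP₀ : Q * P₀ = Q * C * A⁻¹ := by
    rw [hP₀def, Matrix.mul_add, Matrix.mul_smul]
    have e1 : Q * (Q * C * A⁻¹) = Q * C * A⁻¹ := by
      rw [← Matrix.mul_assoc, ← Matrix.mul_assoc, hQQ]
    have e2 : Q * ((1 - Q) * C) = 0 := by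
      rw [← Matrix.mul_assoc, hQ1Q, Matrix.zero_mul]
    rw [e1, e2, smul_zero, add_zero]
  have hmain : Q * P₀ * M + ρ • P₀ = C := by
    rw [hQP₀, hP₀def, smul_add, smul_smul, mul_inv_cancel₀ (ne_of_gt hρ), one_smul,
      ← add_assoc]
    have e5 : Q * C * A⁻¹ * M + ρ • (Q * C * A⁻¹) = Q * C := by
      rw [Matrix.mul_assoc (Q * C) A⁻¹ M, ← Matrix.mul_smul, ← Matrix.mul_add, hAinv',
        Matrix.mul_one]
    rw [e5, Matrix.sub_mul, Matrix.one_mul]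
    abel
  refine ⟨⟨P₀, hmain, ?_⟩, hmain⟩
  intro P hP
  have hD : Q * (P - P₀) * M + ρ • (P - P₀) = 0 := by
    calc Q * (P - P₀) * M + ρ • (P - P₀)
        = (Q * P * M + ρ • P) - (Q * P₀ * M + ρ • P₀) := by
          rw [Matrix.mul_sub, Matrix.sub_mul, smul_sub]; abel
    _ = 0 := by rw [hP, hmain, sub_self]
  have hQD : Q * (P - P₀) = 0 := by
    have e6 : Q * (Q * (P - P₀) * M + ρ • (P - P₀)) = Q * (P - P₀) * A := by
      rw [Matrix.mul_add, Matrix.mul_smul, ← Matrix.mul_assoc Q (Q * (P - P₀)) M,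
        ← Matrix.mul_assoc Q Q (P - P₀), hQQ,
        hAdef, Matrix.mul_add, Matrix.mul_smul, Matrix.mul_one]
    have h2 : Q * (P - P₀) * A = 0 := by rw [← e6, hD, Matrix.mul_zero]
    have := congrArg (· * A⁻¹) h2
    simpa [Matrix.mul_assoc, Matrix.mul_nonsing_inv A hAunit] using this
  have hρD : ρ • (P - P₀) = 0 := by
    rw [← hD, hQD, Matrix.zero_mul, zero_add]
  have h0 : P - P₀ = 0 := by
    have := congrArg (ρ⁻¹ • ·) hρD
    simpa [smul_smul, inv_mul_cancel₀ (ne_of_gt hρ)] using this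
  exact sub_eq_zero.mp h0
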